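/- Let q > 1 be a real number, let α₁, α₂ ∈ ℂ satisfy |α₁ α₂| = 1 and |α₁| < q^{1/2}, |α₂| < q^{1/2}, and let s ∈ ℂ with Re(s) ≥ 0. For m ≥ 0 set A_m = ∑_{j=0}^{m} α₁^{j} α₂^{m−j}. Then the series ∑_{m=0}^{∞} A_{m+1} · conj(A_m) · q^{−m(s+1)} converges absolutely and ( ∏_{i ∈ {1,2}} ∏_{j ∈ {1,2}} (1 − α_i · conj(α_j) · q^{−(s+1)}) ) · ∑_{m=0}^{∞} A_{m+1} · conj(A_m) · q^{−m(s+1)} = (α₁ + α₂) − α₁ α₂ · conj(α₁ + α₂) · q^{−(s+1)}. -/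

import Mathlib

open Complex

/-- The normalized spherical Whittaker value `A_m = ∑_{j=0}^{m} α₁^j α₂^{m-j}`. -/
noncomputable def Asph (α₁ α₂ : ℂ) (m : ℕ) : ℂ :=
  ∑ j ∈ Finset.range (m + 1), α₁ ^ j * α₂ ^ (m - j)

lemma Asph_succ (a b : ℂ) (m : ℕ) :
    Asph a b (m + 1) = a * Asph a b m + b ^ (m + 1) := by
  unfold Asph
  rw [Finset.sum_range_succ']
  simp only [Nat.succ_sub_succ_eq_sub, pow_zero, one_mul, Nat.sub_zero, Finset.mul_sum]
  congr 1
  apply Finset.sum_congr rfl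
  intro j hj
  ring

lemma Asph_rec (a b : ℂ) (m : ℕ) :
    Asph a b (m + 2) = (a + b) * Asph a b (m + 1) - a * b * Asph a b m := by
  have h1 := Asph_succ a b (m + 1)
  have h0 := Asph_succ a b m
  linear_combination h1 - b * h0

lemma rec4 (σ π σ' π' u0 u1 u2 u3 u4 u5 v0 v1 v2 v3 v4 : ℂ)
    (h2 : u2 = σ * u1 - π * u0) (h3 : u3 = σ * u2 - π * u1)
    (h4 : u4 = σ * u3 - π * u2) (h5 : u5 = σ * u4 - π * u3)
    (g2 : v2 = σ' * v1 - π' * v0) (g3 : v3 = σ' * v2 - π' * v1)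
    (g4 : v4 = σ' * v3 - π' * v2) :
    u5 * v4 - σ * σ' * (u4 * v3) + (π' * σ ^ 2 + π * σ' ^ 2 - 2 * π * π') * (u3 * v2)
      - π * π' * σ * σ' * (u2 * v1) + π ^ 2 * π' ^ 2 * (u1 * v0) = 0 := by
  rw [h5, h4, h3, h2, g4, g3, g2]
  ring


lemma Asph_zero (a b : ℂ) : Asph a b 0 = 1 := by simp [Asph]

lemma Asph_one (a b : ℂ) : Asph a b 1 = a + b := by
  have h := Asph_succ a b 0; rw [Asph_zero] at h; norm_num at h; linear_combination h

lemma Asph_two (a b : ℂ) : Asph a b 2 = a ^ 2 + a * b + b ^ 2 := by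
  have h := Asph_succ a b 1; rw [Asph_one] at h; norm_num at h; linear_combination h

lemma Asph_three (a b : ℂ) : Asph a b 3 = a ^ 3 + a ^ 2 * b + a * b ^ 2 + b ^ 3 := by
  have h := Asph_succ a b 2; rw [Asph_two] at h; norm_num at h; linear_combination h

lemma Asph_four (a b : ℂ) :
    Asph a b 4 = a ^ 4 + a ^ 3 * b + a ^ 2 * b ^ 2 + a * b ^ 3 + b ^ 4 := by
  have h := Asph_succ a b 3; rw [Asph_three] at h; norm_num at h; linear_combination h

lemma Asph_conj (a b : ℂ) (m : ℕ) :
    (starRingEnd ℂ) (Asph a b m) = Asph ((starRingEnd ℂ) a) ((starRingEnd ℂ) b) m := by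
  simp [Asph, map_sum, map_mul, map_pow]

lemma key (a b t : ℂ)
    (hsum : Summable (fun m : ℕ => Asph a b (m + 1) * (starRingEnd ℂ) (Asph a b m) * t ^ m)) :
    ((1 - a * (starRingEnd ℂ) a * t) * (1 - a * (starRingEnd ℂ) b * t) *
        (1 - b * (starRingEnd ℂ) a * t) * (1 - b * (starRingEnd ℂ) b * t)) *
      (∑' m : ℕ, Asph a b (m + 1) * (starRingEnd ℂ) (Asph a b m) * t ^ m)
      = (a + b) - a * b * ((starRingEnd ℂ) a + (starRingEnd ℂ) b) * t := by
  set f : ℕ → ℂ := fun m => Asph a b (m + 1) * (starRingEnd ℂ) (Asph a b m) * t ^ m with hf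
  set σ : ℂ := a + b with hσ
  set π : ℂ := a * b with hπ
  set σ' : ℂ := (starRingEnd ℂ) a + (starRingEnd ℂ) b with hσ'
  set π' : ℂ := (starRingEnd ℂ) a * (starRingEnd ℂ) b with hπ'
  set p1 : ℂ := -(σ * σ') with hp1
  set p2 : ℂ := π' * σ ^ 2 + π * σ' ^ 2 - 2 * π * π' with hp2
  set p3 : ℂ := -(π * π' * σ * σ') with hp3
  set p4 : ℂ := π ^ 2 * π' ^ 2 with hp4
  have hB : ∀ m : ℕ, (starRingEnd ℂ) (Asph a b (m + 2)) =
      σ' * (starRingEnd ℂ) (Asph a b (m + 1)) - π' * (starRingEnd ℂ) (Asph a b m) := by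
    intro m
    have := congrArg (starRingEnd ℂ) (Asph_rec a b m)
    simp only [map_sub, map_mul, map_add] at this
    rw [this, hσ', hπ']
  have hA : ∀ m : ℕ, Asph a b (m + 2) = σ * Asph a b (m + 1) - π * Asph a b m := by
    intro m; rw [Asph_rec a b m, hσ, hπ]
  have hterm : ∀ m : ℕ, f (m + 4) + (p1 * t) * f (m + 3) + (p2 * t ^ 2) * f (m + 2)
      + (p3 * t ^ 3) * f (m + 1) + (p4 * t ^ 4) * f m = 0 := by
    intro m
    have r := rec4 σ π σ' π'
      (Asph a b m) (Asph a b (m + 1)) (Asph a b (m + 2)) (Asph a b (m + 3))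
      (Asph a b (m + 4)) (Asph a b (m + 5))
      ((starRingEnd ℂ) (Asph a b m)) ((starRingEnd ℂ) (Asph a b (m + 1)))
      ((starRingEnd ℂ) (Asph a b (m + 2))) ((starRingEnd ℂ) (Asph a b (m + 3)))
      ((starRingEnd ℂ) (Asph a b (m + 4)))
      (hA m) (hA (m + 1)) (hA (m + 2)) (hA (m + 3)) (hB m) (hB (m + 1)) (hB (m + 2))
    simp only [hf]
    simp only [show m + 4 + 1 = m + 5 from rfl, show m + 3 + 1 = m + 4 from rfl,
      show m + 2 + 1 = m + 3 from rfl, show m + 1 + 1 = m + 2 from rfl]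
    linear_combination (t ^ (m + 4)) * r
  have S1 : Summable (fun m : ℕ => f (m + 1)) := (summable_nat_add_iff 1).mpr hsum
  have S2 : Summable (fun m : ℕ => f (m + 2)) := (summable_nat_add_iff 2).mpr hsum
  have S3 : Summable (fun m : ℕ => f (m + 3)) := (summable_nat_add_iff 3).mpr hsum
  have S4 : Summable (fun m : ℕ => f (m + 4)) := (summable_nat_add_iff 4).mpr hsum
  have hz : (∑' m : ℕ, (f (m + 4) + ((p1 * t) * f (m + 3) + ((p2 * t ^ 2) * f (m + 2)
      + ((p3 * t ^ 3) * f (m + 1) + (p4 * t ^ 4) * f m))))) = 0 := by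
    have hfun : (fun m : ℕ => f (m + 4) + ((p1 * t) * f (m + 3) + ((p2 * t ^ 2) * f (m + 2)
        + ((p3 * t ^ 3) * f (m + 1) + (p4 * t ^ 4) * f m)))) = fun _ => (0 : ℂ) := by
      funext m; linear_combination hterm m
    rw [hfun, tsum_zero]
  have E : (∑' m : ℕ, f (m + 4)) + ((p1 * t) * (∑' m : ℕ, f (m + 3))
      + ((p2 * t ^ 2) * (∑' m : ℕ, f (m + 2)) + ((p3 * t ^ 3) * (∑' m : ℕ, f (m + 1))
      + (p4 * t ^ 4) * (∑' m : ℕ, f m)))) = 0 := by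
    rw [← tsum_mul_left, ← tsum_mul_left, ← tsum_mul_left, ← tsum_mul_left,
      ← Summable.tsum_add (S1.mul_left _) (hsum.mul_left _),
      ← Summable.tsum_add (S2.mul_left _) ((S1.mul_left _).add (hsum.mul_left _)),
      ← Summable.tsum_add (S3.mul_left _) ((S2.mul_left _).add ((S1.mul_left _).add (hsum.mul_left _))),
      ← Summable.tsum_add S4 ((S3.mul_left _).add ((S2.mul_left _).add
        ((S1.mul_left _).add (hsum.mul_left _))))]
    exact hz
  have h4' := Summable.sum_add_tsum_nat_add (f := f) 4 hsum
  have h3' := Summable.sum_add_tsum_nat_add (f := f) 3 hsum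
  have h2' := Summable.sum_add_tsum_nat_add (f := f) 2 hsum
  have h1' := Summable.sum_add_tsum_nat_add (f := f) 1 hsum
  norm_num [hf, Asph_conj, Asph_zero, Asph_one, Asph_two, Asph_three, Asph_four,
    Finset.sum_range_succ, Finset.sum_range_zero, hp1, hp2, hp3, hp4, hσ, hπ, hσ', hπ']
    at E h4' h3' h2' h1' ⊢
  linear_combination E - h4'
    + ((a + b) * ((starRingEnd ℂ) a + (starRingEnd ℂ) b) * t) * h3'
    - (((starRingEnd ℂ) a * (starRingEnd ℂ) b) * (a + b) ^ 2
        + a * b * ((starRingEnd ℂ) a + (starRingEnd ℂ) b) ^ 2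
        - 2 * (a * b * ((starRingEnd ℂ) a * (starRingEnd ℂ) b))) * t ^ 2 * h2'
    + (a * b * ((starRingEnd ℂ) a * (starRingEnd ℂ) b) * (a + b)
        * ((starRingEnd ℂ) a + (starRingEnd ℂ) b)) * t ^ 3 * h1'

theorem stmt17 (q : ℝ) (hq : 1 < q) (α₁ α₂ : ℂ)
    (hmul : ‖α₁ * α₂‖ = 1)
    (h1 : ‖α₁‖ < Real.sqrt q) (h2 : ‖α₂‖ < Real.sqrt q)
    (s : ℂ) (hs : 0 ≤ s.re) :
    Summable (fun m : ℕ =>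
      ‖Asph α₁ α₂ (m + 1) * (starRingEnd ℂ) (Asph α₁ α₂ m) *
        (q : ℂ) ^ (-(m : ℂ) * (s + 1))‖) ∧
    ((1 - α₁ * (starRingEnd ℂ) α₁ * (q : ℂ) ^ (-(s + 1))) *
          (1 - α₁ * (starRingEnd ℂ) α₂ * (q : ℂ) ^ (-(s + 1))) *
          (1 - α₂ * (starRingEnd ℂ) α₁ * (q : ℂ) ^ (-(s + 1))) *
          (1 - α₂ * (starRingEnd ℂ) α₂ * (q : ℂ) ^ (-(s + 1)))) *
        (∑' m : ℕ, Asph α₁ α₂ (m + 1) * (starRingEnd ℂ) (Asph α₁ α₂ m) *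
          (q : ℂ) ^ (-(m : ℂ) * (s + 1)))
      = (α₁ + α₂) - α₁ * α₂ * (starRingEnd ℂ) (α₁ + α₂) * (q : ℂ) ^ (-(s + 1)) := by
  have hq0 : (0 : ℝ) < q := by linarith
  set t : ℂ := (q : ℂ) ^ (-(s + 1)) with htdef
  have ht : ∀ m : ℕ, (q : ℂ) ^ (-(m : ℂ) * (s + 1)) = t ^ m := by
    intro m
    rw [htdef, show -(m : ℂ) * (s + 1) = (m : ℕ) * (-(s + 1)) by push_cast; ring,
      Complex.cpow_nat_mul]
  have htle : ‖t‖ ≤ q⁻¹ := by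
    rw [htdef, Complex.norm_cpow_eq_rpow_re_of_pos hq0]
    have hre : (-(s + 1)).re = -(s.re + 1) := by simp
    rw [hre]
    calc q ^ (-(s.re + 1)) ≤ q ^ (-1 : ℝ) :=
          Real.rpow_le_rpow_of_exponent_le hq.le (by linarith)
      _ = q⁻¹ := Real.rpow_neg_one q
  set R : ℝ := max ‖α₁‖ ‖α₂‖ with hRdef
  have hR0 : 0 ≤ R := le_trans (norm_nonneg α₁) (le_max_left _ _)
  have hRq : R ^ 2 < q := by
    have hmax : R < Real.sqrt q := by
      rw [hRdef]
      exact max_lt h1 h2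
    calc R ^ 2 = R * R := sq R
      _ < Real.sqrt q * Real.sqrt q := mul_self_lt_mul_self hR0 hmax
      _ = q := Real.mul_self_sqrt hq0.le
  have hAb : ∀ m : ℕ, ‖Asph α₁ α₂ m‖ ≤ ((m : ℝ) + 1) * R ^ m := by
    intro m
    calc ‖Asph α₁ α₂ m‖ ≤ ∑ j ∈ Finset.range (m + 1), ‖α₁ ^ j * α₂ ^ (m - j)‖ :=
          norm_sum_le _ _
      _ ≤ ∑ j ∈ Finset.range (m + 1), R ^ m := by
          apply Finset.sum_le_sum
          intro j hj
          have hj' : j ≤ m := Nat.lt_succ_iff.mp (Finset.mem_range.mp hj)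
          rw [norm_mul, norm_pow, norm_pow]
          calc ‖α₁‖ ^ j * ‖α₂‖ ^ (m - j) ≤ R ^ j * R ^ (m - j) := by
                apply mul_le_mul (pow_le_pow_left₀ (norm_nonneg _) (le_max_left _ _) j)
                  (pow_le_pow_left₀ (norm_nonneg _) (le_max_right _ _) _)
                  (by positivity) (by positivity)
            _ = R ^ m := by rw [← pow_add]; congr 1; omega
      _ = ((m : ℝ) + 1) * R ^ m := by
          rw [Finset.sum_const, Finset.card_range, nsmul_eq_mul]; push_cast; ring
  set x : ℝ := R ^ 2 * q⁻¹ with hxdef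
  have hx0 : 0 ≤ x := by positivity
  have hx1 : x < 1 := by
    rw [hxdef]
    calc R ^ 2 * q⁻¹ = R ^ 2 / q := by ring
      _ < 1 := by rw [div_lt_one hq0]; exact hRq
  have hle : ∀ m : ℕ, ‖Asph α₁ α₂ (m + 1) * (starRingEnd ℂ) (Asph α₁ α₂ m) * t ^ m‖
      ≤ R * ((m : ℝ) + 2) ^ 2 * x ^ m := by
    intro m
    have hP : 0 ≤ R * x ^ m := by positivity
    calc ‖Asph α₁ α₂ (m + 1) * (starRingEnd ℂ) (Asph α₁ α₂ m) * t ^ m‖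
        = ‖Asph α₁ α₂ (m + 1)‖ * ‖Asph α₁ α₂ m‖ * ‖t‖ ^ m := by
          rw [norm_mul, norm_mul, norm_pow, RCLike.norm_conj]
      _ ≤ (((m + 1 : ℕ) : ℝ) + 1) * R ^ (m + 1) * (((m : ℝ) + 1) * R ^ m) * (q⁻¹) ^ m := by
          apply mul_le_mul
            (mul_le_mul (hAb (m + 1)) (hAb m) (norm_nonneg _) (by positivity))
            (pow_le_pow_left₀ (norm_nonneg _) htle m) (by positivity) (by positivity)
      _ = (((m : ℝ) + 2) * ((m : ℝ) + 1)) * (R * x ^ m) := by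
          rw [hxdef]; push_cast; ring
      _ ≤ (((m : ℝ) + 2) * ((m : ℝ) + 2)) * (R * x ^ m) := by
          apply mul_le_mul_of_nonneg_right _ hP
          have : (0 : ℝ) ≤ (m : ℝ) := Nat.cast_nonneg m
          nlinarith
      _ = R * ((m : ℝ) + 2) ^ 2 * x ^ m := by ring
  have hxn : ‖x‖ < 1 := by rw [Real.norm_eq_abs, _root_.abs_of_nonneg hx0]; exact hx1
  have hmaj : Summable (fun m : ℕ => R * ((m : ℝ) + 2) ^ 2 * x ^ m) := by
    have b2 := summable_pow_mul_geometric_of_norm_lt_one 2 hxn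
    have b1 := summable_pow_mul_geometric_of_norm_lt_one 1 hxn
    have b0 := summable_geometric_of_norm_lt_one hxn
    have hb : Summable (fun m : ℕ => ((m : ℝ) + 2) ^ 2 * x ^ m) := by
      apply Summable.congr (b2.add ((b1.mul_left 4).add (b0.mul_left 4)))
      intro m; push_cast; ring
    exact (hb.mul_left R).congr (fun m => by ring)
  have hnormsum : Summable (fun m : ℕ =>
      ‖Asph α₁ α₂ (m + 1) * (starRingEnd ℂ) (Asph α₁ α₂ m) * t ^ m‖) :=
    Summable.of_nonneg_of_le (fun m => norm_nonneg _) hle hmaj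
  constructor
  · refine hnormsum.congr fun m => ?_
    rw [ht m]
  · have hsum : Summable (fun m : ℕ =>
        Asph α₁ α₂ (m + 1) * (starRingEnd ℂ) (Asph α₁ α₂ m) * t ^ m) :=
      hnormsum.of_norm
    have hts : (∑' m : ℕ, Asph α₁ α₂ (m + 1) * (starRingEnd ℂ) (Asph α₁ α₂ m) *
        (q : ℂ) ^ (-(m : ℂ) * (s + 1)))
        = ∑' m : ℕ, Asph α₁ α₂ (m + 1) * (starRingEnd ℂ) (Asph α₁ α₂ m) * t ^ m :=
      tsum_congr fun m => by rw [ht m]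
    rw [hts, map_add]
    exact key α₁ α₂ t hsum
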